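/- Let d ≥ 1, z = (z_0,…,z_d) with z_0 = z_d = 1, z_s ≥ 0, P(x) = Σ z_s x^s, and z* the reverse of z. Define L̃_z(x) = (1/2)∫₀ˣ (log P(y)/y - (log y)·P'(y)/P(y)) dy, and similarly L̃_{z*} with P replaced by the reversed polynomial P*. Then for all x > 0: L̃_z(x) + L̃_{z*}(1/x) = L̃_z(∞) = L̃_{z*}(∞), where L̃_z(∞) denotes the limit as x → ∞. -/

import Mathlib

open MeasureTheory Real Polynomial Filter

/-- The Rogers dilogarithm of higher degree associated with a polynomial `P`:
`L̃(x) = (1/2)∫₀ˣ (log P(y)/y - log(y)·P'(y)/P(y)) dy`. -/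
noncomputable def Ltil (P : Polynomial ℝ) (x : ℝ) : ℝ :=
  (1/2) * ∫ y in (0:ℝ)..x,
    (Real.log (P.eval y) / y - Real.log y * P.derivative.eval y / P.eval y)

/-- The integrand of `Ltil`. -/
noncomputable def fI (P : Polynomial ℝ) (y : ℝ) : ℝ :=
  Real.log (P.eval y) / y - Real.log y * P.derivative.eval y / P.eval y

lemma Ltil_eq (P : Polynomial ℝ) (x : ℝ) :
    Ltil P x = (1/2) * ∫ y in (0:ℝ)..x, fI P y := rfl

lemma integrableOn_log_Ioc (x : ℝ) : IntegrableOn Real.log (Set.Ioc 0 x) := by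
  have h1 : IntegrableOn Real.log (Set.Ioc (0:ℝ) 1) := by
    have hneg : IntegrableOn (fun y : ℝ => -Real.log y) (Set.Ioc (0:ℝ) 1) := by
      apply intervalIntegral.integrableOn_deriv_of_nonneg (g := fun y : ℝ => y - y * Real.log y)
      · exact (continuous_id.sub Real.continuous_mul_log).continuousOn
      · intro y hy
        have := (hasDerivAt_id y).sub (Real.hasDerivAt_mul_log (ne_of_gt hy.1))
        convert this using 1
        · rfl
        · rfl
        · rfl
        ring
      · intro y hy
        simpa using Real.log_nonpos hy.1.le hy.2.le
    have h := hneg.neg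
    have hfun : (-fun y : ℝ => -Real.log y) = Real.log := by
      funext y; simp
    rwa [hfun] at h
  rcases le_total x 1 with h | h
  · exact h1.mono_set (Set.Ioc_subset_Ioc_right h)
  · have h2 : IntegrableOn Real.log (Set.Ioc 1 x) := by
      apply ((Real.continuousOn_log.mono ?_).integrableOn_Icc).mono_set Set.Ioc_subset_Icc_self
      intro y hy
      simp only [Set.mem_compl_iff, Set.mem_singleton_iff]
      intro h0
      rw [h0] at hy
      exact absurd hy.1 (by norm_num)
    have := h1.union h2
    rwa [Set.Ioc_union_Ioc_eq_Ioc zero_le_one h] at this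

lemma measurable_fI (P : Polynomial ℝ) : Measurable (fI P) := by
  apply Measurable.sub
  · exact (Real.measurable_log.comp P.continuous.measurable).div measurable_id
  · exact (Real.measurable_log.mul P.derivative.continuous.measurable).div
      P.continuous.measurable

lemma fI_intervalIntegrable (P : Polynomial ℝ) (h0 : P.eval 0 = 1)
    (h1 : ∀ y : ℝ, 0 ≤ y → 1 ≤ P.eval y) {x : ℝ} (hx : 0 < x) :
    IntervalIntegrable (fI P) volume 0 x := by
  rw [intervalIntegrable_iff_integrableOn_Ioc_of_le hx.le]
  obtain ⟨Q, hQ⟩ : (X : ℝ[X]) ∣ (P - C 1) := by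
    rw [Polynomial.X_dvd_iff, Polynomial.coeff_sub, Polynomial.coeff_zero_eq_eval_zero, h0]
    simp
  obtain ⟨M, hM⟩ := (isCompact_Icc (a := (0:ℝ)) (b := x)).exists_bound_of_continuousOn
    P.derivative.continuous.continuousOn
  apply Integrable.mono' (g := fun y => |Q.eval y| + M * |Real.log y|)
  · apply Integrable.add
    · exact (Q.continuous.abs.integrableOn_Icc).mono_set Set.Ioc_subset_Icc_self
    · exact ((integrableOn_log_Ioc x).abs).const_mul M
  · exact ((measurable_fI P).aestronglyMeasurable).restrict
  · filter_upwards [ae_restrict_mem measurableSet_Ioc] with y hy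
    have hy0 : 0 < y := hy.1
    have hPy : 1 ≤ P.eval y := h1 y hy0.le
    have hPy0 : 0 < P.eval y := lt_of_lt_of_le one_pos hPy
    have hevQ : P.eval y - 1 = y * Q.eval y := by
      have := congrArg (Polynomial.eval y) hQ
      simpa using this
    have ht1a : 0 ≤ Real.log (P.eval y) / y :=
      div_nonneg (Real.log_nonneg hPy) hy0.le
    have ht1b : Real.log (P.eval y) / y ≤ |Q.eval y| := by
      rw [div_le_iff₀ hy0]
      calc Real.log (P.eval y) ≤ P.eval y - 1 := Real.log_le_sub_one_of_pos hPy0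
        _ = y * Q.eval y := hevQ
        _ ≤ y * |Q.eval y| := by
            exact mul_le_mul_of_nonneg_left (le_abs_self _) hy0.le
        _ = |Q.eval y| * y := mul_comm _ _
    have ht2 : |Real.log y * P.derivative.eval y / P.eval y| ≤ M * |Real.log y| := by
      rw [abs_div, abs_mul]
      have hd : |P.derivative.eval y| ≤ M := by
        have := hM y ⟨hy0.le, hy.2⟩
        simpa using this
      have hPabs : (1:ℝ) ≤ |P.eval y| := by rwa [abs_of_pos hPy0]
      calc |Real.log y| * |P.derivative.eval y| / |P.eval y|
          ≤ |Real.log y| * |P.derivative.eval y| / 1 := by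
            apply div_le_div_of_nonneg_left _ one_pos hPabs |>.trans_eq rfl
            positivity
        _ = |Real.log y| * |P.derivative.eval y| := by ring
        _ ≤ |Real.log y| * M := by
            exact mul_le_mul_of_nonneg_left hd (abs_nonneg _)
        _ = M * |Real.log y| := mul_comm _ _
    calc ‖fI P y‖ ≤ |Real.log (P.eval y) / y| + |Real.log y * P.derivative.eval y / P.eval y| :=
          abs_sub _ _
      _ ≤ |Q.eval y| + M * |Real.log y| := by
          apply add_le_add _ ht2
          rwa [abs_of_nonneg ht1a]

lemma fI_continuousAt (P : Polynomial ℝ) (h1 : ∀ y : ℝ, 0 ≤ y → 1 ≤ P.eval y)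
    {x : ℝ} (hx : 0 < x) : ContinuousAt (fI P) x := by
  have hx0 : x ≠ 0 := ne_of_gt hx
  have hPx : P.eval x ≠ 0 := ne_of_gt (lt_of_lt_of_le one_pos (h1 x hx.le))
  apply ContinuousAt.sub
  · exact (P.continuousAt.log hPx).div continuousAt_id hx0
  · exact (((Real.continuousAt_log hx0).mul P.derivative.continuousAt).div
      P.continuousAt hPx)

lemma hasDerivAt_Ltil (P : Polynomial ℝ) (h0 : P.eval 0 = 1)
    (h1 : ∀ y : ℝ, 0 ≤ y → 1 ≤ P.eval y) {x : ℝ} (hx : 0 < x) :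
    HasDerivAt (Ltil P) ((1/2) * fI P x) x := by
  have hint := fI_intervalIntegrable P h0 h1 hx
  have hd := intervalIntegral.integral_hasDerivAt_right hint
    ((measurable_fI P).stronglyMeasurable.stronglyMeasurableAtFilter)
    (fI_continuousAt P h1 hx)
  exact hd.const_mul (1/2 : ℝ)

lemma tendsto_Ltil_inv (P : Polynomial ℝ) (h0 : P.eval 0 = 1)
    (h1 : ∀ y : ℝ, 0 ≤ y → 1 ≤ P.eval y) :
    Tendsto (fun u : ℝ => Ltil P (1/u)) atTop (nhds 0) := by
  have hint : IntegrableOn (fI P) (Set.uIcc (0:ℝ) 1) := by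
    rw [Set.uIcc_of_le (zero_le_one)]
    rw [integrableOn_Icc_iff_integrableOn_Ioc]
    rw [← intervalIntegrable_iff_integrableOn_Ioc_of_le zero_le_one]
    exact fI_intervalIntegrable P h0 h1 one_pos
  have hcont := intervalIntegral.continuousOn_primitive_interval hint
  have h00 : (0:ℝ) ∈ Set.uIcc (0:ℝ) 1 := Set.left_mem_uIcc
  have hcw := hcont 0 h00
  have hval : (∫ t in (0:ℝ)..(0:ℝ), fI P t) = 0 := intervalIntegral.integral_same
  have htend : Tendsto (fun u : ℝ => (1:ℝ)/u) atTop (nhdsWithin 0 (Set.uIcc (0:ℝ) 1)) := by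
    rw [tendsto_nhdsWithin_iff]
    constructor
    · simpa only [one_div] using tendsto_inv_atTop_zero
    · filter_upwards [eventually_ge_atTop (1:ℝ)] with u hu
      rw [Set.uIcc_of_le zero_le_one]
      constructor
      · positivity
      · rw [div_le_one (by linarith)]; linarith
  have := (hcw.tendsto.comp htend)
  rw [hval] at this
  have : Tendsto (fun u : ℝ => (1/2 : ℝ) * ∫ t in (0:ℝ)..(1/u), fI P t) atTop (nhds 0) := by
    have h2 := this.const_mul (1/2 : ℝ)
    simpa using h2
  exact this.congr (fun u => (Ltil_eq P (1/u)).symm)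

theorem Ltil_duality
    (d : ℕ) (hd : 1 ≤ d) (z : ℕ → ℝ)
    (hz0 : z 0 = 1) (hzd : z d = 1) (hznn : ∀ s, s ≤ d → 0 ≤ z s)
    (P Pstar : Polynomial ℝ)
    (hP : P = ∑ s ∈ Finset.range (d + 1), Polynomial.C (z s) * Polynomial.X ^ s)
    (hPstar : Pstar = ∑ s ∈ Finset.range (d + 1), Polynomial.C (z (d - s)) * Polynomial.X ^ s) :
    ∃ l : ℝ, Tendsto (Ltil P) atTop (nhds l) ∧ Tendsto (Ltil Pstar) atTop (nhds l) ∧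
      ∀ x : ℝ, 0 < x → Ltil P x + Ltil Pstar (1 / x) = l := by
  -- eval formulas
  have hPev : ∀ u : ℝ, P.eval u = ∑ s ∈ Finset.range (d + 1), z s * u ^ s := by
    intro u; simp [hP, Polynomial.eval_finset_sum]
  have hSev : ∀ u : ℝ, Pstar.eval u = ∑ s ∈ Finset.range (d + 1), z (d - s) * u ^ s := by
    intro u; simp [hPstar, Polynomial.eval_finset_sum]
  -- eval at 0
  have hev0 : ∀ w : ℕ → ℝ, (∑ s ∈ Finset.range (d + 1), w s * (0:ℝ) ^ s) = w 0 := by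
    intro w
    rw [Finset.sum_eq_single 0]
    · simp
    · intro b _ hb; simp [zero_pow hb]
    · intro h; exact absurd (Finset.mem_range.mpr (Nat.succ_pos d)) h
  have hP0 : P.eval 0 = 1 := by rw [hPev, hev0, hz0]
  have hS0 : Pstar.eval 0 = 1 := by rw [hSev, hev0]; simpa using hzd
  -- positivity
  have hP1 : ∀ y : ℝ, 0 ≤ y → 1 ≤ P.eval y := by
    intro y hy
    rw [hPev]
    have := Finset.single_le_sum (f := fun s => z s * y ^ s)
      (fun s hs => mul_nonneg (hznn s (Nat.lt_succ_iff.mp (Finset.mem_range.mp hs)))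
        (pow_nonneg hy s)) (Finset.mem_range.mpr (Nat.succ_pos d))
    simpa [hz0] using this
  have hS1 : ∀ y : ℝ, 0 ≤ y → 1 ≤ Pstar.eval y := by
    intro y hy
    rw [hSev]
    have := Finset.single_le_sum (f := fun s => z (d - s) * y ^ s)
      (fun s hs => mul_nonneg (hznn (d - s) (Nat.sub_le d s)) (pow_nonneg hy s))
      (Finset.mem_range.mpr (Nat.succ_pos d))
    simpa [hzd] using this
  -- the key reflection identity
  have hrefl : ∀ x : ℝ, 0 < x → x ^ d * Pstar.eval x⁻¹ = P.eval x := by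
    intro x hx
    rw [hSev, hPev, Finset.mul_sum,
      ← Finset.sum_range_reflect (fun j => z j * x ^ j) (d + 1)]
    apply Finset.sum_congr rfl
    intro s hs
    have hsd : s ≤ d := Nat.lt_succ_iff.mp (Finset.mem_range.mp hs)
    have hds : d + 1 - 1 - s = d - s := by omega
    rw [hds, inv_pow, pow_sub₀ x (ne_of_gt hx) hsd]
    field_simp
  -- derivative reflection identity (by differentiating hrefl)
  have hrefl' : ∀ x : ℝ, 0 < x →
      x ^ d * Pstar.derivative.eval x⁻¹ = d * x * P.eval x - x ^ 2 * P.derivative.eval x := by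
    intro x hx
    have hx0 : x ≠ 0 := ne_of_gt hx
    have hinv : HasDerivAt (fun u : ℝ => u⁻¹) (-(x^2)⁻¹) x := hasDerivAt_inv hx0
    have hS' : HasDerivAt (fun u : ℝ => Pstar.eval u⁻¹)
        (Pstar.derivative.eval x⁻¹ * (-(x^2)⁻¹)) x :=
      (Pstar.hasDerivAt x⁻¹).comp x hinv
    have hpow : HasDerivAt (fun u : ℝ => u ^ d) (d * x ^ (d - 1)) x := by
      simpa using hasDerivAt_pow d x
    have hprod : HasDerivAt (fun u : ℝ => u ^ d * Pstar.eval u⁻¹)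
        (d * x ^ (d - 1) * Pstar.eval x⁻¹ +
          x ^ d * (Pstar.derivative.eval x⁻¹ * (-(x^2)⁻¹))) x := hpow.mul hS'
    have heq : (fun u : ℝ => u ^ d * Pstar.eval u⁻¹) =ᶠ[nhds x] (fun u => P.eval u) := by
      filter_upwards [IsOpen.mem_nhds isOpen_Ioi hx] with u hu
      exact hrefl u hu
    have hP' : HasDerivAt (fun u : ℝ => u ^ d * Pstar.eval u⁻¹) (P.derivative.eval x) x :=
      (P.hasDerivAt x).congr_of_eventuallyEq heq
    have huniq := hprod.unique hP'
    -- From huniq derive the claim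
    have hxd1 : x ^ (d - 1) = x ^ d / x := by
      rw [eq_div_iff hx0, ← pow_succ]
      congr 1
      omega
    have hPev' : Pstar.eval x⁻¹ = P.eval x / x ^ d := by
      rw [← hrefl x hx]; field_simp
    rw [hxd1, hPev'] at huniq
    have hxd : x ^ d ≠ 0 := pow_ne_zero d hx0
    field_simp at huniq
    simp only [one_div] at huniq
    have hxxd : x * x ^ d ≠ 0 := by positivity
    apply mul_right_cancel₀ hxxd
    linear_combination (-(x * x ^ d)) * huniq
  -- derivative of the combination is zero
  have key : ∀ x : ℝ, 0 < x →
      HasDerivAt (fun u : ℝ => Ltil P u + Ltil Pstar (1/u)) 0 x := by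
    intro x hx
    have hx0 : x ≠ 0 := ne_of_gt hx
    have hxinv : 0 < x⁻¹ := inv_pos.mpr hx
    have h1 := hasDerivAt_Ltil P hP0 hP1 hx
    have h2 := hasDerivAt_Ltil Pstar hS0 hS1 hxinv
    have hinv : HasDerivAt (fun u : ℝ => u⁻¹) (-(x^2)⁻¹) x := hasDerivAt_inv hx0
    have hcomp : HasDerivAt (fun u : ℝ => Ltil Pstar u⁻¹)
        ((1/2) * fI Pstar x⁻¹ * (-(x^2)⁻¹)) x := h2.comp x hinv
    have hsum := h1.add hcomp
    have hval : (1/2) * fI P x + (1/2) * fI Pstar x⁻¹ * (-(x^2)⁻¹) = 0 := by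
      have ha : (1:ℝ) ≤ P.eval x := hP1 x hx.le
      have ha0 : P.eval x ≠ 0 := by linarith
      have has : (1:ℝ) ≤ Pstar.eval x⁻¹ := hS1 x⁻¹ hxinv.le
      have has0 : Pstar.eval x⁻¹ ≠ 0 := by linarith
      have hi := hrefl x hx
      have hii := hrefl' x hx
      have hlog : Real.log (Pstar.eval x⁻¹) = Real.log (P.eval x) - d * Real.log x := by
        have : Pstar.eval x⁻¹ = P.eval x / x ^ d := by rw [← hi]; field_simp
        rw [this, Real.log_div ha0 (pow_ne_zero d hx0), Real.log_pow]
      have hbs : Pstar.derivative.eval x⁻¹ / Pstar.eval x⁻¹ =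
          (d * x * P.eval x - x ^ 2 * P.derivative.eval x) / P.eval x := by
        rw [← hii, ← hi]
        rw [mul_div_mul_left _ _ (pow_ne_zero d hx0)]
      simp only [fI, hlog, Real.log_inv, mul_div_assoc]
      rw [hbs]
      field_simp
      ring
    rw [← hval]
    convert hsum using 2 with u
    · rfl
    · rfl
    rw [one_div]
    rfl
  -- constancy
  set Φ : ℝ → ℝ := fun u => Ltil P u + Ltil Pstar (1/u) with hΦ
  have hconst : ∀ x : ℝ, 0 < x → Φ x = Φ 1 := by
    intro x hx
    set a := min x 1 with ha'
    set b := max x 1 with hb'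
    have ha : 0 < a := lt_min hx one_pos
    have hab : a ≤ b := min_le_max
    have hcont : ContinuousOn Φ (Set.Icc a b) := by
      intro y hy
      exact ((key y (lt_of_lt_of_le ha hy.1)).continuousAt).continuousWithinAt
    have hderiv : ∀ y ∈ Set.Ico a b, HasDerivWithinAt Φ 0 (Set.Ici y) y := by
      intro y hy
      exact (key y (lt_of_lt_of_le ha hy.1)).hasDerivWithinAt
    have hc := constant_of_has_deriv_right_zero hcont hderiv
    have h1 := hc x ⟨min_le_left _ _, le_max_left _ _⟩
    have h2 := hc 1 ⟨min_le_right _ _, le_max_right _ _⟩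
    rw [h1, h2]
  refine ⟨Φ 1, ?_, ?_, fun x hx => hconst x hx⟩
  · -- Ltil P → Φ 1
    have htz := tendsto_Ltil_inv Pstar hS0 hS1
    have : Tendsto (fun u : ℝ => Φ 1 - Ltil Pstar (1/u)) atTop (nhds (Φ 1 - 0)) :=
      tendsto_const_nhds.sub htz
    rw [sub_zero] at this
    apply this.congr'
    filter_upwards [eventually_gt_atTop (0:ℝ)] with u hu
    have h := hconst u hu
    simp only [hΦ] at h ⊢
    linarith
  · -- Ltil Pstar → Φ 1
    have htz := tendsto_Ltil_inv P hP0 hP1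
    have : Tendsto (fun u : ℝ => Φ 1 - Ltil P (1/u)) atTop (nhds (Φ 1 - 0)) :=
      tendsto_const_nhds.sub htz
    rw [sub_zero] at this
    apply this.congr'
    filter_upwards [eventually_gt_atTop (0:ℝ)] with u hu
    have h := hconst (1/u) (by positivity)
    simp only [hΦ, one_div_one_div] at h ⊢
    linarith
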